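/- Let E and F be Banach lattices. If every weak Dunford-Pettis operator T : E → F is a σ-unbounded Dunford-Pettis operator, then at least one of the following holds: (1) the norm dual E' has order continuous norm; (2) F has order continuous norm. -/

import Mathlib

set_option linter.unusedSectionVars false
set_option maxHeartbeats 1000000


open Filter Topology

/-- A sequence in a Banach lattice is uaw-null if `|x n| ⊓ u` converges weakly to `0`
for every `u ≥ 0`. -/
def UawNullSeq {E : Type*} [NormedAddCommGroup E] [Lattice E] [IsOrderedAddMonoid E] [HasSolidNorm E] [NormedSpace ℝ E]
    (x : ℕ → E) : Prop :=
  ∀ u : E, 0 ≤ u → ∀ f : E →L[ℝ] ℝ,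
    Tendsto (fun n => f (|x n| ⊓ u)) atTop (𝓝 0)

/-- A sequence in a Banach lattice is un-null if `‖|y n| ⊓ v‖ → 0` for every `v ≥ 0`. -/
def UnNullSeq {F : Type*} [NormedAddCommGroup F] [Lattice F] [IsOrderedAddMonoid F] [HasSolidNorm F] [NormedSpace ℝ F]
    (y : ℕ → F) : Prop :=
  ∀ v : F, 0 ≤ v → Tendsto (fun n => ‖|y n| ⊓ v‖) atTop (𝓝 0)

/-- A sequence is weakly null if `f (x n) → 0` for every continuous linear functional `f`. -/
def WeaklyNullSeq {E : Type*} [NormedAddCommGroup E] [NormedSpace ℝ E]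
    (x : ℕ → E) : Prop :=
  ∀ f : E →L[ℝ] ℝ, Tendsto (fun n => f (x n)) atTop (𝓝 0)

/-- σ-unbounded Dunford-Pettis operator. -/
def SigmaUDP {E F : Type*} [NormedAddCommGroup E] [Lattice E] [IsOrderedAddMonoid E] [HasSolidNorm E] [NormedSpace ℝ E]
    [NormedAddCommGroup F] [Lattice F] [IsOrderedAddMonoid F] [HasSolidNorm F] [NormedSpace ℝ F] (T : E →L[ℝ] F) : Prop :=
  ∀ x : ℕ → E, (∃ C : ℝ, ∀ n, ‖x n‖ ≤ C) → UawNullSeq x → UnNullSeq fun n => T (x n)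

/-- Dunford-Pettis operator: maps weakly null sequences to norm null sequences. -/
def DunfordPettis {E F : Type*} [NormedAddCommGroup E] [NormedSpace ℝ E]
    [NormedAddCommGroup F] [NormedSpace ℝ F] (T : E →L[ℝ] F) : Prop :=
  ∀ x : ℕ → E, WeaklyNullSeq x → Tendsto (fun n => ‖T (x n)‖) atTop (𝓝 0)

/-- A net (indexed by a directed preorder) is uaw-null. -/
def UawNullNet {E : Type*} [NormedAddCommGroup E] [Lattice E] [IsOrderedAddMonoid E] [HasSolidNorm E] [NormedSpace ℝ E]
    {ι : Type} [Preorder ι] (x : ι → E) : Prop :=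
  ∀ u : E, 0 ≤ u → ∀ f : E →L[ℝ] ℝ,
    Tendsto (fun i => f (|x i| ⊓ u)) atTop (𝓝 0)

/-- A net (indexed by a directed preorder) is un-null. -/
def UnNullNet {F : Type*} [NormedAddCommGroup F] [Lattice F] [IsOrderedAddMonoid F] [HasSolidNorm F] [NormedSpace ℝ F]
    {ι : Type} [Preorder ι] (y : ι → F) : Prop :=
  ∀ v : F, 0 ≤ v → Tendsto (fun i => ‖|y i| ⊓ v‖) atTop (𝓝 0)

/-- Unbounded Dunford-Pettis operator: maps norm bounded uaw-null nets to un-null nets. -/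
def UDP {E F : Type*} [NormedAddCommGroup E] [Lattice E] [IsOrderedAddMonoid E] [HasSolidNorm E] [NormedSpace ℝ E]
    [NormedAddCommGroup F] [Lattice F] [IsOrderedAddMonoid F] [HasSolidNorm F] [NormedSpace ℝ F] (T : E →L[ℝ] F) : Prop :=
  ∀ (ι : Type) [Preorder ι] [IsDirected ι (· ≤ ·)] [Nonempty ι] (x : ι → E),
    (∃ C : ℝ, ∀ i, ‖x i‖ ≤ C) → UawNullNet x → UnNullNet fun i => T (x i)

/-- uaw-continuous operator: maps norm bounded uaw-null nets to uaw-null nets. -/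
def UawContinuous {E F : Type*} [NormedAddCommGroup E] [Lattice E] [IsOrderedAddMonoid E] [HasSolidNorm E] [NormedSpace ℝ E]
    [NormedAddCommGroup F] [Lattice F] [IsOrderedAddMonoid F] [HasSolidNorm F] [NormedSpace ℝ F] (T : E →L[ℝ] F) : Prop :=
  ∀ (ι : Type) [Preorder ι] [IsDirected ι (· ≤ ·)] [Nonempty ι] (x : ι → E),
    (∃ C : ℝ, ∀ i, ‖x i‖ ≤ C) → UawNullNet x → UawNullNet fun i => T (x i)

/-- A Banach lattice has order continuous norm if every decreasing net with infimum `0`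
converges to `0` in norm. -/
def OrderContinuousNorm (E : Type*) [NormedAddCommGroup E] [Lattice E] [IsOrderedAddMonoid E] [HasSolidNorm E] : Prop :=
  ∀ (ι : Type) [Preorder ι] [IsDirected ι (· ≤ ·)] [Nonempty ι] (x : ι → E),
    Antitone x → IsGLB (Set.range x) 0 → Tendsto (fun i => ‖x i‖) atTop (𝓝 0)

/-- The norm dual of `E` has order continuous norm. -/
def DualOrderContinuousNorm (E : Type*) [NormedAddCommGroup E] [Lattice E] [IsOrderedAddMonoid E] [HasSolidNorm E] [NormedSpace ℝ E] :
    Prop :=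
  ∀ (ι : Type) [Preorder ι] [IsDirected ι (· ≤ ·)] [Nonempty ι] (f : ι → E →L[ℝ] ℝ),
    (∀ i, ∀ x : E, 0 ≤ x → 0 ≤ f i x) →
    (∀ i j, i ≤ j → ∀ x : E, 0 ≤ x → f j x ≤ f i x) →
    (∀ x : E, 0 ≤ x → IsGLB (Set.range fun i => f i x) 0) →
    Tendsto (fun i => ‖f i‖) atTop (𝓝 0)

/-- Strong order unit. -/
def HasStrongOrderUnit (F : Type*) [NormedAddCommGroup F] [Lattice F] [IsOrderedAddMonoid F] [HasSolidNorm F] : Prop :=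
  ∃ e : F, 0 ≤ e ∧ ∀ y : F, ∃ n : ℕ, |y| ≤ n • e

/-- AM-space. -/
def IsAMSpace (E : Type*) [NormedAddCommGroup E] [Lattice E] [IsOrderedAddMonoid E] [HasSolidNorm E] : Prop :=
  ∀ x y : E, 0 ≤ x → 0 ≤ y → ‖x ⊔ y‖ = max ‖x‖ ‖y‖

/-- An atom of a Banach lattice. -/
def IsLatticeAtom {E : Type*} [NormedAddCommGroup E] [Lattice E] [IsOrderedAddMonoid E] [HasSolidNorm E] [NormedSpace ℝ E] (a : E) :
    Prop :=
  0 < a ∧ ∀ x : E, 0 ≤ x → x ≤ a → ∃ c : ℝ, x = c • a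

/-- An atomic Banach lattice: below every `x > 0` there is an atom. -/
def IsAtomicLattice (E : Type*) [NormedAddCommGroup E] [Lattice E] [IsOrderedAddMonoid E] [HasSolidNorm E] [NormedSpace ℝ E] : Prop :=
  ∀ x : E, 0 < x → ∃ a : E, IsLatticeAtom a ∧ a ≤ x

/-- Relatively sequentially un-compact set. -/
def RelSeqUnCompact {F : Type*} [NormedAddCommGroup F] [Lattice F] [IsOrderedAddMonoid F] [HasSolidNorm F] [NormedSpace ℝ F]
    (A : Set F) : Prop :=
  ∀ y : ℕ → F, (∀ n, y n ∈ A) →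
    ∃ (z : F) (φ : ℕ → ℕ), StrictMono φ ∧
      ∀ v : F, 0 ≤ v → Tendsto (fun k => ‖|y (φ k) - z| ⊓ v‖) atTop (𝓝 0)

/-- Sequentially un-compact operator. -/
def SeqUnCompactOp {E F : Type*} [NormedAddCommGroup E] [Lattice E] [IsOrderedAddMonoid E] [HasSolidNorm E] [NormedSpace ℝ E]
    [NormedAddCommGroup F] [Lattice F] [IsOrderedAddMonoid F] [HasSolidNorm F] [NormedSpace ℝ F] (S : E →L[ℝ] F) : Prop :=
  RelSeqUnCompact (S '' Metric.closedBall 0 1)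

/-- M-weakly compact operator. -/
def MWeaklyCompact {E F : Type*} [NormedAddCommGroup E] [Lattice E] [IsOrderedAddMonoid E] [HasSolidNorm E] [NormedSpace ℝ E]
    [NormedAddCommGroup F] [NormedSpace ℝ F] (T : E →L[ℝ] F) : Prop :=
  ∀ x : ℕ → E, (∃ C : ℝ, ∀ n, ‖x n‖ ≤ C) →
    (∀ i j, i ≠ j → |x i| ⊓ |x j| = 0) →
    Tendsto (fun n => ‖T (x n)‖) atTop (𝓝 0)

/-- L-weakly compact operator. -/
def LWeaklyCompact {E F : Type*} [NormedAddCommGroup E] [NormedSpace ℝ E]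
    [NormedAddCommGroup F] [Lattice F] [IsOrderedAddMonoid F] [HasSolidNorm F] [NormedSpace ℝ F] (T : E →L[ℝ] F) : Prop :=
  ∀ y : ℕ → F, (∀ n, ∃ a ∈ T '' Metric.closedBall 0 1, |y n| ≤ |a|) →
    (∀ i j, i ≠ j → |y i| ⊓ |y j| = 0) →
    Tendsto (fun n => ‖y n‖) atTop (𝓝 0)

/-- Relatively weakly compact subset of a normed space. -/
def RelWeaklyCompact {F : Type*} [NormedAddCommGroup F] [NormedSpace ℝ F] (S : Set F) :
    Prop :=
  IsCompact (closure ((toWeakSpace ℝ F) '' S))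

/-- weak Dunford-Pettis operator. -/
def WeakDunfordPettis {E F : Type*} [NormedAddCommGroup E] [NormedSpace ℝ E]
    [NormedAddCommGroup F] [NormedSpace ℝ F] (T : E →L[ℝ] F) : Prop :=
  ∀ x : ℕ → E, WeaklyNullSeq x →
    ∀ f : ℕ → (F →L[ℝ] ℝ),
      (∀ G : (F →L[ℝ] ℝ) →L[ℝ] ℝ, Tendsto (fun n => G (f n)) atTop (𝓝 0)) →
      Tendsto (fun n => f n (T (x n))) atTop (𝓝 0)

/-- Dedekind complete lattice. -/
def DedekindComplete (E : Type*) [Lattice E] : Prop :=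
  ∀ s : Set E, s.Nonempty → BddAbove s → ∃ a, IsLUB s a

/-- Dedekind σ-complete lattice. -/
def DedekindSigmaComplete (E : Type*) [Lattice E] : Prop :=
  ∀ s : Set E, s.Countable → s.Nonempty → BddAbove s → ∃ a, IsLUB s a





open Filter Topology

section AuxLattice

variable {E : Type*} [NormedAddCommGroup E] [Lattice E] [IsOrderedAddMonoid E] [HasSolidNorm E]

lemma myAdd_inf_eq_zero {a b c : E} (ha : 0 ≤ a) (hb : 0 ≤ b) (hc : 0 ≤ c)
    (h1 : a ⊓ c = 0) (h2 : b ⊓ c = 0) : (a + b) ⊓ c = 0 := by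
  refine le_antisymm ?_ (le_inf (add_nonneg ha hb) hc)
  have h4 : (a + b) ⊓ (a + c) = a := by rw [← add_inf, h2, add_zero]
  have h5 : (a + b) ⊓ c ≤ a := by
    calc (a + b) ⊓ c ≤ (a + b) ⊓ (a + c) :=
          inf_le_inf_left _ (le_add_of_nonneg_left ha)
      _ = a := h4
  have h6 := le_inf h5 (inf_le_right : (a + b) ⊓ c ≤ c)
  rwa [h1] at h6

lemma myNsmul_inf_eq_zero {a c : E} (ha : 0 ≤ a) (hc : 0 ≤ c) (h : a ⊓ c = 0) (n : ℕ) :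
    (n • a) ⊓ c = 0 := by
  induction n with
  | zero => simpa using inf_eq_left.mpr hc
  | succ n ih =>
    rw [succ_nsmul]
    exact myAdd_inf_eq_zero (nsmul_nonneg ha n) ha hc ih h

lemma myNonneg_of_nsmul_nonneg {z : E} {n : ℕ} (hn : 0 < n) (h : 0 ≤ n • z) : 0 ≤ z := by
  have hp : 0 ≤ z⁺ := posPart_nonneg z
  have hq : 0 ≤ z⁻ := negPart_nonneg z
  have hd : z⁺ ⊓ z⁻ = 0 := posPart_inf_negPart_eq_zero z
  have hzz : z⁺ - z⁻ = z := posPart_sub_negPart z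
  have h1 : n • z⁻ ≤ n • z⁺ := by
    have e : n • z = n • z⁺ - n • z⁻ := by rw [← smul_sub, hzz]
    rw [e] at h
    exact sub_nonneg.1 h
  have h2 : (n • z⁺) ⊓ (n • z⁻) = 0 := by
    have ha : (n • z⁺) ⊓ z⁻ = 0 := myNsmul_inf_eq_zero hp hq hd n
    have hb : (n • z⁻) ⊓ (n • z⁺) = 0 :=
      myNsmul_inf_eq_zero hq (nsmul_nonneg hp n) (by rw [inf_comm]; exact ha) n
    rw [inf_comm]; exact hb
  have h3 : n • z⁻ ≤ 0 := by
    have : n • z⁻ ≤ (n • z⁺) ⊓ (n • z⁻) := le_inf h1 le_rfl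
    rwa [h2] at this
  have h4 : z⁻ ≤ n • z⁻ := by
    obtain ⟨k, rfl⟩ : ∃ k, n = k + 1 := ⟨n - 1, by omega⟩
    rw [succ_nsmul]
    exact le_add_of_nonneg_left (nsmul_nonneg hq k)
  have h5 : z⁻ = 0 := le_antisymm (h4.trans h3) hq
  have e : 0 ≤ z⁺ - z⁻ := by rw [h5, sub_zero]; exact hp
  rwa [hzz] at e

variable [NormedSpace ℝ E]

lemma myReal_smul_nonneg {c : ℝ} (hc : 0 ≤ c) {x : E} (hx : 0 ≤ x) : 0 ≤ c • x := by
  have key : ∀ m k : ℕ, 0 ≤ ((m : ℝ) / 2 ^ k) • x := by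
    intro m k
    have h2k : (0 : ℝ) < 2 ^ k := by positivity
    have hz : 0 ≤ ((2 : ℝ) ^ k)⁻¹ • x := by
      refine myNonneg_of_nsmul_nonneg (n := 2 ^ k) (by positivity) ?_
      have e : (2 ^ k : ℕ) • (((2 : ℝ) ^ k)⁻¹ • x) = x := by
        rw [← Nat.cast_smul_eq_nsmul ℝ, smul_smul]
        push_cast
        rw [mul_inv_cancel₀ (ne_of_gt h2k), one_smul]
      rw [e]; exact hx
    have e : ((m : ℝ) / 2 ^ k) • x = m • (((2 : ℝ) ^ k)⁻¹ • x) := by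
      rw [← Nat.cast_smul_eq_nsmul ℝ, smul_smul, div_eq_mul_inv]
    rw [e]
    exact nsmul_nonneg hz m
  have hlim : Tendsto (fun k : ℕ => ((⌈c * 2 ^ k⌉₊ : ℝ) / 2 ^ k)) atTop (𝓝 c) := by
    have hb : ∀ k : ℕ, c ≤ (⌈c * 2 ^ k⌉₊ : ℝ) / 2 ^ k := by
      intro k
      have h2k : (0 : ℝ) < 2 ^ k := by positivity
      rw [le_div_iff₀ h2k]
      exact Nat.le_ceil _
    have hb2 : ∀ k : ℕ, (⌈c * 2 ^ k⌉₊ : ℝ) / 2 ^ k ≤ c + (2⁻¹ : ℝ) ^ k := by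
      intro k
      have h2k : (0 : ℝ) < 2 ^ k := by positivity
      rw [div_le_iff₀ h2k]
      have := Nat.ceil_lt_add_one (by positivity : (0:ℝ) ≤ c * 2 ^ k)
      have e : (c + (2⁻¹ : ℝ) ^ k) * 2 ^ k = c * 2 ^ k + 1 := by
        rw [add_mul, inv_pow, inv_mul_cancel₀ (ne_of_gt h2k)]
      rw [e]
      exact this.le
    have hup : Tendsto (fun k : ℕ => c + (2⁻¹ : ℝ) ^ k) atTop (𝓝 c) := by
      have := tendsto_pow_atTop_nhds_zero_of_lt_one (by norm_num : (0:ℝ) ≤ 2⁻¹)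
        (by norm_num : (2⁻¹ : ℝ) < 1)
      simpa using tendsto_const_nhds.add this
    exact tendsto_of_tendsto_of_tendsto_of_le_of_le tendsto_const_nhds hup hb hb2
  have hlim2 : Tendsto (fun k : ℕ => ((⌈c * 2 ^ k⌉₊ : ℝ) / 2 ^ k) • x) atTop (𝓝 (c • x)) :=
    hlim.smul_const x
  exact le_of_tendsto_of_tendsto' tendsto_const_nhds hlim2 fun k => key _ k

lemma myReal_smul_le {c d : ℝ} (h : c ≤ d) {x : E} (hx : 0 ≤ x) : c • x ≤ d • x := by
  have := myReal_smul_nonneg (sub_nonneg.2 h) hx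
  rw [sub_smul] at this
  exact sub_nonneg.1 this

lemma myReal_smul_mono {c : ℝ} (hc : 0 ≤ c) {x y : E} (h : x ≤ y) : c • x ≤ c • y := by
  have := myReal_smul_nonneg hc (sub_nonneg.2 h)
  rw [smul_sub] at this
  exact sub_nonneg.1 this

lemma myReal_smul_sup {c : ℝ} (hc : 0 < c) (a b : E) : c • (a ⊔ b) = c • a ⊔ c • b := by
  refine le_antisymm ?_ (sup_le (myReal_smul_mono hc.le le_sup_left)
    (myReal_smul_mono hc.le le_sup_right))
  have h1 : a ⊔ b ≤ c⁻¹ • (c • a ⊔ c • b) := by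
    refine sup_le ?_ ?_
    · have := myReal_smul_mono (inv_nonneg.2 hc.le) (le_sup_left : c • a ≤ c • a ⊔ c • b)
      rwa [smul_smul, inv_mul_cancel₀ hc.ne', one_smul] at this
    · have := myReal_smul_mono (inv_nonneg.2 hc.le) (le_sup_right : c • b ≤ c • a ⊔ c • b)
      rwa [smul_smul, inv_mul_cancel₀ hc.ne', one_smul] at this
  have := myReal_smul_mono hc.le h1
  rwa [smul_smul, mul_inv_cancel₀ hc.ne', one_smul] at this

lemma myKey_disj {a b : E} (hb : 0 ≤ b) {s t : ℝ} (ht : 0 < t) (hst : 1 ≤ s * t) :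
    ((a - s • b) ⊔ 0) ⊓ ((b - t • a) ⊔ 0) = 0 := by
  set c := ((a - s • b) ⊔ 0) ⊓ ((b - t • a) ⊔ 0) with hcdef
  have hc0 : 0 ≤ c := le_inf le_sup_right le_sup_right
  have hct : t • c ≤ (t • a - b) ⊔ 0 := by
    have h1 : t • c ≤ t • ((a - s • b) ⊔ 0) := myReal_smul_mono ht.le inf_le_left
    have h2 : t • ((a - s • b) ⊔ 0) = (t • a - (s * t) • b) ⊔ 0 := by
      rw [myReal_smul_sup ht, smul_zero, smul_sub, smul_smul, mul_comm t s]
    have h3 : (t • a - (s * t) • b) ⊔ 0 ≤ (t • a - b) ⊔ 0 := by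
      refine sup_le_sup_right (sub_le_sub_left ?_ _) _
      have := myReal_smul_le hst hb
      rwa [one_smul] at this
    calc t • c ≤ (t • a - (s * t) • b) ⊔ 0 := h2 ▸ h1
      _ ≤ (t • a - b) ⊔ 0 := h3
  have hcn : c ≤ (-(t • a - b)) ⊔ 0 := by
    have : c ≤ (b - t • a) ⊔ 0 := inf_le_right
    rwa [← neg_sub (t • a) b] at this
  set r := min t 1 with hrdef
  have hr : 0 < r := lt_min ht one_pos
  have hrc1 : r • c ≤ (t • a - b) ⊔ 0 := (myReal_smul_le (min_le_left t 1) hc0).trans hct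
  have hrc2 : r • c ≤ (-(t • a - b)) ⊔ 0 := by
    have := myReal_smul_le (min_le_right t 1) hc0
    rw [one_smul] at this
    exact this.trans hcn
  have hinf : ((t • a - b) ⊔ 0) ⊓ ((-(t • a - b)) ⊔ 0) = 0 := by
    have := posPart_inf_negPart_eq_zero (t • a - b)
    rwa [posPart_def, negPart_def] at this
  have hrc : r • c ≤ 0 := by
    have := le_inf hrc1 hrc2
    rwa [hinf] at this
  have hrc0 : r • c = 0 := le_antisymm hrc (myReal_smul_nonneg hr.le hc0)
  have : c = r⁻¹ • (r • c) := by rw [smul_smul, inv_mul_cancel₀ hr.ne', one_smul]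
  rw [this, hrc0, smul_zero]

end AuxLattice

open Filter Topology
section A2
variable {E : Type*} [NormedAddCommGroup E] [Lattice E] [IsOrderedAddMonoid E] [HasSolidNorm E] [NormedSpace ℝ E]

lemma myPos_mono {φ : E →L[ℝ] ℝ} (hφ : ∀ x : E, 0 ≤ x → 0 ≤ φ x) {u v : E} (h : u ≤ v) :
    φ u ≤ φ v := by
  have := hφ _ (sub_nonneg.2 h)
  rw [map_sub] at this
  linarith

lemma myAbs_apply_le {φ : E →L[ℝ] ℝ} (hφ : ∀ x : E, 0 ≤ x → 0 ≤ φ x) (y : E) :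
    |φ y| ≤ φ |y| := by
  rw [abs_le]
  refine ⟨?_, myPos_mono hφ (le_abs_self y)⟩
  have := myPos_mono hφ (neg_le_abs y)
  rw [map_neg] at this
  linarith

lemma myOpNorm_le_of_unit {φ : E →L[ℝ] ℝ} {c : ℝ} (hc : 0 ≤ c)
    (h : ∀ x : E, ‖x‖ ≤ 1 → ‖φ x‖ ≤ c) : ‖φ‖ ≤ c := by
  refine φ.opNorm_le_bound hc fun x => ?_
  rcases eq_or_ne x 0 with rfl | hx
  · simp
  · have hxn : 0 < ‖x‖ := norm_pos_iff.2 hx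
    have h1 := h (‖x‖⁻¹ • x) (by
      rw [norm_smul, norm_inv, norm_norm, inv_mul_cancel₀ hxn.ne'])
    rw [map_smul, norm_smul, norm_inv, norm_norm] at h1
    calc ‖φ x‖ = ‖x‖ * (‖x‖⁻¹ * ‖φ x‖) := by
          rw [← mul_assoc, mul_inv_cancel₀ hxn.ne', one_mul]
      _ ≤ ‖x‖ * c := by
          have := mul_le_mul_of_nonneg_left h1 hxn.le
          simpa using this
      _ = c * ‖x‖ := mul_comm _ _

lemma myExists_pos_unit {φ : E →L[ℝ] ℝ} (hφ : ∀ x : E, 0 ≤ x → 0 ≤ φ x) {c : ℝ}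
    (hc0 : 0 ≤ c) (hc : c < ‖φ‖) : ∃ x : E, 0 ≤ x ∧ ‖x‖ ≤ 1 ∧ c < φ x := by
  by_contra hcon
  push_neg at hcon
  refine absurd (myOpNorm_le_of_unit hc0 fun x hx => ?_) (not_le.2 hc)
  have h1 : |φ x| ≤ φ |x| := myAbs_apply_le hφ x
  have h2 : φ |x| ≤ c := hcon |x| (abs_nonneg x) (by rwa [norm_abs_eq_norm])
  calc ‖φ x‖ = |φ x| := Real.norm_eq_abs _
    _ ≤ φ |x| := h1
    _ ≤ c := h2

lemma myOpNorm_mono {φ ψ : E →L[ℝ] ℝ} (hφ : ∀ x : E, 0 ≤ x → 0 ≤ φ x)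
    (h : ∀ x : E, 0 ≤ x → φ x ≤ ψ x) : ‖φ‖ ≤ ‖ψ‖ := by
  refine myOpNorm_le_of_unit (norm_nonneg ψ) fun x hx => ?_
  calc ‖φ x‖ = |φ x| := Real.norm_eq_abs _
    _ ≤ φ |x| := myAbs_apply_le hφ x
    _ ≤ ψ |x| := h _ (abs_nonneg x)
    _ ≤ ‖ψ |x|‖ := by rw [Real.norm_eq_abs]; exact le_abs_self _
    _ ≤ ‖ψ‖ * ‖|x|‖ := ψ.le_opNorm _
    _ = ‖ψ‖ * ‖x‖ := by rw [norm_abs_eq_norm]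
    _ ≤ ‖ψ‖ * 1 := by
        have := mul_le_mul_of_nonneg_left hx (norm_nonneg ψ)
        simpa using this
    _ = ‖ψ‖ := mul_one _

lemma mySum_inf_eq_zero (z : ℕ → E) {c : E} (hc : 0 ≤ c) :
    ∀ A : Finset ℕ, (∀ k ∈ A, 0 ≤ z k) → (∀ k ∈ A, z k ⊓ c = 0) →
      (∑ k ∈ A, z k) ⊓ c = 0 := by
  intro A
  induction A using Finset.cons_induction with
  | empty => intro _ _; simpa using inf_eq_left.mpr hc
  | cons a s ha ih =>
    intro hz hd
    rw [Finset.sum_cons]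
    have hs0 : 0 ≤ ∑ k ∈ s, z k :=
      Finset.sum_nonneg fun k hk => hz k (Finset.mem_cons_of_mem hk)
    exact myAdd_inf_eq_zero (hz a (Finset.mem_cons_self a s)) hs0 hc
      (hd a (Finset.mem_cons_self a s))
      (ih (fun k hk => hz k (Finset.mem_cons_of_mem hk))
        (fun k hk => hd k (Finset.mem_cons_of_mem hk)))

lemma mySum_disjoint_le (z : ℕ → E) {u : E} (hu : 0 ≤ u) :
    ∀ A : Finset ℕ, (∀ k ∈ A, 0 ≤ z k) → (∀ k ∈ A, z k ≤ u) →
      (∀ i ∈ A, ∀ j ∈ A, i ≠ j → z i ⊓ z j = 0) → ∑ k ∈ A, z k ≤ u := by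
  intro A
  induction A using Finset.cons_induction with
  | empty => intro _ _ _; simpa using hu
  | cons a s ha ih =>
    intro hz hzu hd
    rw [Finset.sum_cons]
    have hs0 : 0 ≤ ∑ k ∈ s, z k :=
      Finset.sum_nonneg fun k hk => hz k (Finset.mem_cons_of_mem hk)
    have hdisj : (∑ k ∈ s, z k) ⊓ z a = 0 := by
      refine mySum_inf_eq_zero z (hz a (Finset.mem_cons_self a s)) s
        (fun k hk => hz k (Finset.mem_cons_of_mem hk)) fun k hk => ?_
      exact hd k (Finset.mem_cons_of_mem hk) a (Finset.mem_cons_self a s)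
        (fun hka => ha (hka ▸ hk))
    have heq : z a + ∑ k ∈ s, z k = z a ⊔ ∑ k ∈ s, z k := by
      have h0 := inf_add_sup (z a) (∑ k ∈ s, z k)
      rw [inf_comm] at h0
      rw [hdisj, zero_add] at h0
      exact h0.symm
    rw [heq]
    exact sup_le (hzu a (Finset.mem_cons_self a s))
      (ih (fun k hk => hz k (Finset.mem_cons_of_mem hk))
        (fun k hk => hzu k (Finset.mem_cons_of_mem hk))
        (fun i hi j hj hij => hd i (Finset.mem_cons_of_mem hi) j (Finset.mem_cons_of_mem hj) hij))

lemma myTendsto_zero_of_disjoint (z : ℕ → E) {u : E} (hu : 0 ≤ u) (hz : ∀ n, 0 ≤ z n)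
    (hzu : ∀ n, z n ≤ u) (hd : ∀ i j, i ≠ j → z i ⊓ z j = 0) (φ : E →L[ℝ] ℝ) :
    Tendsto (fun n => φ (z n)) atTop (𝓝 0) := by
  classical
  have key : ∀ C : Finset ℕ, |φ (∑ k ∈ C, z k)| ≤ ‖φ‖ * ‖u‖ := by
    intro C
    have h1 : 0 ≤ ∑ k ∈ C, z k := Finset.sum_nonneg fun k _ => hz k
    have h2 : ∑ k ∈ C, z k ≤ u :=
      mySum_disjoint_le z hu C (fun k _ => hz k) (fun k _ => hzu k)
        (fun i _ j _ hij => hd i j hij)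
    have h3 : ‖∑ k ∈ C, z k‖ ≤ ‖u‖ := by
      refine HasSolidNorm.solid ?_
      rw [abs_of_nonneg h1, abs_of_nonneg hu]
      exact h2
    calc |φ (∑ k ∈ C, z k)| = ‖φ (∑ k ∈ C, z k)‖ := (Real.norm_eq_abs _).symm
      _ ≤ ‖φ‖ * ‖∑ k ∈ C, z k‖ := φ.le_opNorm _
      _ ≤ ‖φ‖ * ‖u‖ := mul_le_mul_of_nonneg_left h3 (norm_nonneg φ)
  have hsum : Summable fun n => |φ (z n)| := by
    refine summable_of_sum_range_le (c := 2 * (‖φ‖ * ‖u‖)) (fun n => abs_nonneg _) fun n => ?_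
    set A := (Finset.range n).filter (fun k => 0 ≤ φ (z k)) with hA
    set B := (Finset.range n).filter (fun k => ¬ 0 ≤ φ (z k)) with hB
    have split : ∑ k ∈ A, |φ (z k)| + ∑ k ∈ B, |φ (z k)| = ∑ k ∈ Finset.range n, |φ (z k)| :=
      Finset.sum_filter_add_sum_filter_not _ _ _
    have e1 : ∑ k ∈ A, |φ (z k)| = φ (∑ k ∈ A, z k) := by
      rw [map_sum]
      exact Finset.sum_congr rfl fun k hk => abs_of_nonneg (Finset.mem_filter.1 hk).2
    have e2 : ∑ k ∈ B, |φ (z k)| = -φ (∑ k ∈ B, z k) := by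
      rw [map_sum, ← Finset.sum_neg_distrib]
      exact Finset.sum_congr rfl fun k hk =>
        abs_of_neg (lt_of_not_ge (Finset.mem_filter.1 hk).2)
    have b1 : φ (∑ k ∈ A, z k) ≤ ‖φ‖ * ‖u‖ := (le_abs_self _).trans (key A)
    have b2 : -φ (∑ k ∈ B, z k) ≤ ‖φ‖ * ‖u‖ := (neg_le_abs _).trans (key B)
    calc ∑ k ∈ Finset.range n, |φ (z k)|
        = φ (∑ k ∈ A, z k) + -φ (∑ k ∈ B, z k) := by rw [← split, e1, e2]
      _ ≤ ‖φ‖ * ‖u‖ + ‖φ‖ * ‖u‖ := add_le_add b1 b2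
      _ = 2 * (‖φ‖ * ‖u‖) := by ring
  have h0 := hsum.tendsto_atTop_zero
  rw [tendsto_zero_iff_norm_tendsto_zero]
  simpa [Real.norm_eq_abs] using h0

end A2
/-- if every weak Dunford-Pettis operator `E → F` is σ-uDP, then `E'` has
order continuous norm or `F` has order continuous norm. -/
theorem dual_or_range_orderContinuous_of_weakDP_sigmaUDP
    {E F : Type*} [NormedAddCommGroup E] [Lattice E] [IsOrderedAddMonoid E] [HasSolidNorm E] [NormedSpace ℝ E] [CompleteSpace E]
    [NormedAddCommGroup F] [Lattice F] [IsOrderedAddMonoid F] [HasSolidNorm F] [NormedSpace ℝ F] [CompleteSpace F]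
    (h : ∀ T : E →L[ℝ] F, WeakDunfordPettis T → SigmaUDP T) :
    DualOrderContinuousNorm E ∨ OrderContinuousNorm F := by
  by_cases hF : ∀ y : F, y = 0
  · right
    intro ι _ _ _ x _ _
    have hx : (fun i => ‖x i‖) = fun _ => (0 : ℝ) := funext fun i => by
      rw [hF (x i), norm_zero]
    rw [hx]
    exact tendsto_const_nhds
  · left
    push_neg at hF
    obtain ⟨y₀, hy₀⟩ := hF
    intro ι _ _ _ f hpos hanti hglb
    by_contra hnot
    set e : F := |y₀| with he
    have he0 : 0 ≤ e := abs_nonneg y₀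
    have hen : 0 < ‖e‖ := by rw [he, norm_abs_eq_norm]; exact norm_pos_iff.2 hy₀
    obtain ⟨ε, hε, hfreq⟩ : ∃ ε : ℝ, 0 < ε ∧ ∀ i₀ : ι, ∃ i, i₀ ≤ i ∧ ε ≤ ‖f i‖ := by
      by_contra hc
      push_neg at hc
      apply hnot
      rw [Metric.tendsto_nhds]
      intro δ hδ
      obtain ⟨i₀, hi₀⟩ := hc δ hδ
      filter_upwards [Filter.Ici_mem_atTop i₀] with i hi
      rw [Real.dist_eq, sub_zero, abs_of_nonneg (norm_nonneg _)]
      exact hi₀ i hi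
    have hsmall : ∀ v : E, 0 ≤ v → ∀ δ : ℝ, 0 < δ → ∃ i₀, ∀ i, i₀ ≤ i → f i v < δ := by
      intro v hv δ hδ
      have hg := hglb v hv
      have hex : ∃ i₀, f i₀ v < δ := by
        by_contra hcc
        push_neg at hcc
        have hlb : δ ∈ lowerBounds (Set.range fun i => f i v) := by
          rintro r ⟨i, rfl⟩; exact hcc i
        linarith [hg.2 hlb]
      obtain ⟨i₀, hi₀⟩ := hex
      exact ⟨i₀, fun i hi => lt_of_le_of_lt (hanti i₀ i hi v hv) hi₀⟩
    have hstep : ∀ (n : ℕ) (i : ι) (σ : E), ∃ q : ι × E,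
        i ≤ q.1 ∧ f q.1 (σ ⊔ 0) < ε / (16 * 4 ^ n) ∧ 0 ≤ q.2 ∧ ‖q.2‖ ≤ 1 ∧
          ε / 2 < f q.1 q.2 := by
      intro n i σ
      have hδ : 0 < ε / (16 * 4 ^ n) := by positivity
      obtain ⟨j₀, hj₀⟩ := hsmall (σ ⊔ 0) le_sup_right _ hδ
      obtain ⟨j, hij, hj₀j⟩ := exists_ge_ge i j₀
      obtain ⟨i', hji', hnorm⟩ := hfreq j
      obtain ⟨x', hx1, hx2, hx3⟩ := myExists_pos_unit (hpos i') (by positivity)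
        (lt_of_lt_of_le (half_lt_self hε) hnorm)
      exact ⟨(i', x'), hij.trans hji', hj₀ i' (hj₀j.trans hji'), hx1, hx2, hx3⟩
    choose stp hstp1 hstp2 hstp3 hstp4 hstp5 using hstep
    have hne : Nonempty ι := inferInstance
    obtain ⟨ibase⟩ := hne
    let S : ℕ → ι × E × E := fun n => Nat.rec
      ((stp 0 ibase 0).1, (stp 0 ibase 0).2, (stp 0 ibase 0).2)
      (fun n p => ((stp (n+1) p.1 p.2.2).1, (stp (n+1) p.1 p.2.2).2,
        p.2.2 + (stp (n+1) p.1 p.2.2).2)) n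
    let idx : ℕ → ι := fun n => (S n).1
    let x : ℕ → E := fun n => (S n).2.1
    let σ : ℕ → E := fun n => (S n).2.2
    -- basic properties
    have hx0 : ∀ n, 0 ≤ x n := by
      intro n
      cases n with
      | zero => exact hstp3 0 ibase 0
      | succ n => exact hstp3 (n+1) (idx n) (σ n)
    have hxn1 : ∀ n, ‖x n‖ ≤ 1 := by
      intro n
      cases n with
      | zero => exact hstp4 0 ibase 0
      | succ n => exact hstp4 (n+1) (idx n) (σ n)
    have hxb : ∀ n, ε / 2 < f (idx n) (x n) := by
      intro n
      cases n with
      | zero => exact hstp5 0 ibase 0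
      | succ n => exact hstp5 (n+1) (idx n) (σ n)
    have himono : Monotone idx :=
      monotone_nat_of_le_succ fun n => hstp1 (n+1) (idx n) (σ n)
    have hσ0 : ∀ n, 0 ≤ σ n := by
      intro n
      induction n with
      | zero => exact hstp3 0 ibase 0
      | succ n ih => exact add_nonneg ih (hstp3 (n+1) (idx n) (σ n))
    have hxσ : ∀ n, x n ≤ σ n := by
      intro n
      cases n with
      | zero => exact le_rfl
      | succ n => exact le_add_of_nonneg_left (hσ0 n)
    have hσmono : Monotone σ :=
      monotone_nat_of_le_succ fun n => le_add_of_nonneg_right (hstp3 (n+1) (idx n) (σ n))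
    have hxσle : ∀ k n, k ≤ n → x k ≤ σ n := fun k n hkn =>
      (hxσ k).trans (hσmono hkn)
    have hsmalln : ∀ n, f (idx (n+1)) (σ n) < ε / (16 * 4 ^ (n+1)) := by
      intro n
      have h0 := hstp2 (n+1) (idx n) (σ n)
      rwa [sup_eq_left.mpr (hσ0 n)] at h0
    -- the element u
    have hnb : ∀ k : ℕ, ‖((2:ℝ)⁻¹ ^ k) • x k‖ ≤ (2:ℝ)⁻¹ ^ k := by
      intro k
      rw [norm_smul, Real.norm_eq_abs, abs_pow, abs_of_nonneg (by norm_num : (0:ℝ) ≤ 2⁻¹)]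
      calc ((2:ℝ)⁻¹ ^ k) * ‖x k‖ ≤ ((2:ℝ)⁻¹ ^ k) * 1 :=
            mul_le_mul_of_nonneg_left (hxn1 k) (by positivity)
        _ = (2:ℝ)⁻¹ ^ k := mul_one _
    have hgeo : Summable fun k : ℕ => (2:ℝ)⁻¹ ^ k :=
      summable_geometric_of_lt_one (by norm_num) (by norm_num)
    have hsummable : Summable fun k : ℕ => ((2:ℝ)⁻¹ ^ k) • x k :=
      Summable.of_norm_bounded hgeo hnb
    set u : E := ∑' k : ℕ, ((2:ℝ)⁻¹ ^ k) • x k with hu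
    have hu0 : 0 ≤ u :=
      tsum_nonneg fun k => myReal_smul_nonneg (by positivity) (hx0 k)
    have hule : ∀ k, ((2:ℝ)⁻¹ ^ k) • x k ≤ u := fun k =>
      Summable.le_tsum hsummable k fun j _ => myReal_smul_nonneg (by positivity) (hx0 j)
    have hunorm : ‖u‖ ≤ 2 := by
      have hnsum : Summable fun k : ℕ => ‖((2:ℝ)⁻¹ ^ k) • x k‖ :=
        Summable.of_nonneg_of_le (fun k => norm_nonneg _) hnb hgeo
      calc ‖u‖ ≤ ∑' k : ℕ, ‖((2:ℝ)⁻¹ ^ k) • x k‖ := norm_tsum_le_tsum_norm hnsum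
        _ ≤ ∑' k : ℕ, (2:ℝ)⁻¹ ^ k := Summable.tsum_le_tsum hnb hnsum hgeo
        _ = (1 - 2⁻¹)⁻¹ := tsum_geometric_of_lt_one (by norm_num) (by norm_num)
        _ = 2 := by norm_num
    -- the disjoint sequence
    set y : ℕ → E := fun n => (x (n+1) - (4:ℝ) ^ n • σ n - ((2:ℝ)⁻¹ ^ n) • u) ⊔ 0 with hy
    have hy0 : ∀ n, 0 ≤ y n := fun n => le_sup_right
    have hyle : ∀ n, y n ≤ x (n+1) := by
      intro n
      refine sup_le ?_ (hx0 (n+1))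
      have h1 : 0 ≤ (4:ℝ) ^ n • σ n := myReal_smul_nonneg (by positivity) (hσ0 n)
      have h2 : 0 ≤ ((2:ℝ)⁻¹ ^ n) • u := myReal_smul_nonneg (by positivity) hu0
      calc x (n+1) - (4:ℝ) ^ n • σ n - ((2:ℝ)⁻¹ ^ n) • u
          ≤ x (n+1) - (4:ℝ) ^ n • σ n := sub_le_self _ h2
        _ ≤ x (n+1) := sub_le_self _ h1
    have hynorm : ∀ n, ‖y n‖ ≤ 1 := by
      intro n
      refine le_trans (HasSolidNorm.solid ?_) (hxn1 (n+1))
      rw [abs_of_nonneg (hy0 n), abs_of_nonneg (hx0 (n+1))]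
      exact hyle n
    have hydisj : ∀ m n, m < n → y m ⊓ y n = 0 := by
      intro m n hmn
      set s : ℝ := (2:ℝ)⁻¹ ^ m * (2:ℝ)⁻¹ ^ (n+1) with hs
      set t : ℝ := (4:ℝ) ^ n with ht
      have hym : y m ≤ (x (m+1) - s • x (n+1)) ⊔ 0 := by
        refine sup_le_sup_right ?_ 0
        have h1 : x (m+1) - (4:ℝ) ^ m • σ m - ((2:ℝ)⁻¹ ^ m) • u
            ≤ x (m+1) - ((2:ℝ)⁻¹ ^ m) • u := by
          have := sub_le_self (x (m+1)) (myReal_smul_nonneg (by positivity : (0:ℝ) ≤ (4:ℝ)^m) (hσ0 m))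
          exact sub_le_sub_right this _
        have h2 : s • x (n+1) ≤ ((2:ℝ)⁻¹ ^ m) • u := by
          have h3 := myReal_smul_mono (c := (2:ℝ)⁻¹ ^ m) (by positivity) (hule (n+1))
          rwa [smul_smul] at h3
        exact h1.trans (sub_le_sub_left h2 _)
      have hyn : y n ≤ (x (n+1) - t • x (m+1)) ⊔ 0 := by
        refine sup_le_sup_right ?_ 0
        have h1 : t • x (m+1) ≤ t • σ n :=
          myReal_smul_mono (by positivity) (hxσle (m+1) n hmn)
        calc x (n+1) - (4:ℝ) ^ n • σ n - ((2:ℝ)⁻¹ ^ n) • u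
            ≤ x (n+1) - (4:ℝ) ^ n • σ n :=
              sub_le_self _ (myReal_smul_nonneg (by positivity) hu0)
          _ ≤ x (n+1) - t • x (m+1) := sub_le_sub_left h1 _
      have hst : 1 ≤ s * t := by
        have e1 : s = ((2:ℝ) ^ (m + (n+1)))⁻¹ := by
          rw [hs, ← pow_add, inv_pow]
        have e2 : t = (2:ℝ) ^ (2 * n) := by
          rw [ht, show (4:ℝ) = 2 ^ 2 by norm_num, ← pow_mul]
        have h2 : (2:ℝ) ^ (m + (n+1)) ≤ 2 ^ (2 * n) :=
          pow_le_pow_right₀ one_le_two (by omega)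
        rw [e1, e2, ← div_eq_inv_mul, le_div_iff₀ (by positivity)]
        simpa using h2
      have hkey := myKey_disj (a := x (m+1)) (b := x (n+1)) (hx0 (n+1))
        (t := t) (s := s) (by positivity) hst
      refine le_antisymm ?_ (le_inf (hy0 m) (hy0 n))
      calc y m ⊓ y n ≤ ((x (m+1) - s • x (n+1)) ⊔ 0) ⊓ ((x (n+1) - t • x (m+1)) ⊔ 0) :=
            inf_le_inf hym hyn
        _ = 0 := hkey
    -- norm bound for the functionals
    set M : ℝ := ‖f (idx 0)‖ with hM
    have hM0 : 0 ≤ M := norm_nonneg _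
    have hMn : ∀ n, ‖f (idx n)‖ ≤ M := fun n =>
      myOpNorm_mono (hpos (idx n)) fun v hv => hanti (idx 0) (idx n) (himono (Nat.zero_le n)) v hv
    obtain ⟨N₀, hN₀⟩ : ∃ N₀ : ℕ, ∀ n, N₀ ≤ n → ((2:ℝ)⁻¹ ^ n) * (2 * M + 2) ≤ ε / 8 := by
      have htend := tendsto_pow_atTop_nhds_zero_of_lt_one
        (by norm_num : (0:ℝ) ≤ 2⁻¹) (by norm_num : (2⁻¹:ℝ) < 1)
      have hpos8 : 0 < ε / 8 / (2 * M + 2) := by positivity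
      have hev : ∀ᶠ n : ℕ in atTop, ((2:ℝ)⁻¹ ^ n) * (2 * M + 2) ≤ ε / 8 := by
        filter_upwards [htend.eventually (gt_mem_nhds hpos8)] with n hn
        have := mul_le_mul_of_nonneg_right hn.le (by positivity : (0:ℝ) ≤ 2 * M + 2)
        calc ((2:ℝ)⁻¹ ^ n) * (2 * M + 2) ≤ (ε / 8 / (2 * M + 2)) * (2 * M + 2) := this
          _ = ε / 8 := by field_simp
      obtain ⟨N₀, hN₀⟩ := eventually_atTop.1 hev
      exact ⟨N₀, fun n hn => hN₀ n hn⟩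
    have hyest : ∀ n, N₀ ≤ n → ε / 4 ≤ f (idx 0) (y n) := by
      intro n hn
      have h1 : f (idx (n+1)) (x (n+1) - (4:ℝ) ^ n • σ n - ((2:ℝ)⁻¹ ^ n) • u)
          ≤ f (idx (n+1)) (y n) := myPos_mono (hpos _) le_sup_left
      have h2 : f (idx (n+1)) (x (n+1) - (4:ℝ) ^ n • σ n - ((2:ℝ)⁻¹ ^ n) • u)
          = f (idx (n+1)) (x (n+1)) - (4:ℝ) ^ n * f (idx (n+1)) (σ n)
            - ((2:ℝ)⁻¹ ^ n) * f (idx (n+1)) u := by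
        rw [map_sub, map_sub, map_smul, map_smul, smul_eq_mul, smul_eq_mul]
      have h3 : (4:ℝ) ^ n * f (idx (n+1)) (σ n) ≤ ε / 16 := by
        have hlt := (hsmalln n).le
        have h4pos : (0:ℝ) < 4 ^ n := by positivity
        calc (4:ℝ) ^ n * f (idx (n+1)) (σ n) ≤ (4:ℝ) ^ n * (ε / (16 * 4 ^ (n+1))) :=
              mul_le_mul_of_nonneg_left hlt h4pos.le
          _ = ε / 64 := by
              rw [pow_succ]
              field_simp
              ring
          _ ≤ ε / 16 := by linarith
      have h5 : ((2:ℝ)⁻¹ ^ n) * f (idx (n+1)) u ≤ ε / 8 := by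
        have hfu : f (idx (n+1)) u ≤ 2 * M + 2 := by
          calc f (idx (n+1)) u ≤ |f (idx (n+1)) u| := le_abs_self _
            _ = ‖f (idx (n+1)) u‖ := (Real.norm_eq_abs _).symm
            _ ≤ ‖f (idx (n+1))‖ * ‖u‖ := (f (idx (n+1))).le_opNorm u
            _ ≤ M * 2 := mul_le_mul (hMn (n+1)) hunorm (norm_nonneg u) hM0
            _ ≤ 2 * M + 2 := by linarith
        calc ((2:ℝ)⁻¹ ^ n) * f (idx (n+1)) u ≤ ((2:ℝ)⁻¹ ^ n) * (2 * M + 2) :=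
              mul_le_mul_of_nonneg_left hfu (by positivity)
          _ ≤ ε / 8 := hN₀ n hn
      have h6 : ε / 2 < f (idx (n+1)) (x (n+1)) := hxb (n+1)
      have h7 : ε / 4 ≤ f (idx (n+1)) (y n) := by linarith
      calc ε / 4 ≤ f (idx (n+1)) (y n) := h7
        _ ≤ f (idx 0) (y n) := hanti (idx 0) (idx (n+1)) (himono (Nat.zero_le (n+1))) (y n) (hy0 n)
    -- the operator and the contradiction
    set w : ℕ → E := fun k => y (N₀ + k) with hw
    set g0 : E →L[ℝ] ℝ := f (idx 0) with hg0
    set T : E →L[ℝ] F := g0.smulRight e with hT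
    have hwdp : WeakDunfordPettis T := by
      intro xs hxs fs hfs
      have h1 : Tendsto (fun n => g0 (xs n)) atTop (𝓝 0) := hxs g0
      have h2 : Tendsto (fun n => fs n e) atTop (𝓝 0) := by
        have h3 := hfs (ContinuousLinearMap.apply ℝ ℝ e)
        simpa using h3
      have he2 : (fun n => fs n (T (xs n))) = fun n => g0 (xs n) * fs n e := by
        funext n
        rw [hT, ContinuousLinearMap.smulRight_apply, map_smul, smul_eq_mul]
      rw [he2]
      simpa using h1.mul h2
    have hwb : ∃ C : ℝ, ∀ n, ‖w n‖ ≤ C := ⟨1, fun n => hynorm _⟩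
    have hwdisj : ∀ i j, i ≠ j → w i ⊓ w j = 0 := by
      intro i j hij
      rcases lt_or_gt_of_ne hij with hlt | hlt
      · exact hydisj _ _ (by omega)
      · rw [inf_comm]; exact hydisj _ _ (by omega)
    have huaw : UawNullSeq w := by
      intro v hv φ
      have habs : ∀ n, |w n| = w n := fun n => abs_of_nonneg (hy0 _)
      have hz0 : ∀ n, 0 ≤ |w n| ⊓ v := fun n => le_inf (abs_nonneg _) hv
      refine myTendsto_zero_of_disjoint (fun n => |w n| ⊓ v) hv hz0
        (fun n => inf_le_right) ?_ φ
      intro i j hij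
      refine le_antisymm ?_ (le_inf (hz0 i) (hz0 j))
      have hi1 : |w i| ⊓ v ≤ w i := by rw [habs i]; exact inf_le_left
      have hj1 : |w j| ⊓ v ≤ w j := by rw [habs j]; exact inf_le_left
      calc (|w i| ⊓ v) ⊓ (|w j| ⊓ v) ≤ w i ⊓ w j := inf_le_inf hi1 hj1
        _ = 0 := hwdisj i j hij
    have hun := h T hwdp w hwb huaw e he0
    set c₀ : ℝ := min (ε / 4) 1 with hc₀
    have hc₀pos : 0 < c₀ := lt_min (by positivity) one_pos
    have hlow : ∀ n, c₀ * ‖e‖ ≤ ‖|T (w n)| ⊓ e‖ := by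
      intro n
      have hgw : ε / 4 ≤ g0 (w n) := hyest (N₀ + n) (Nat.le_add_right _ _)
      have hTw : T (w n) = g0 (w n) • e := by rw [hT, ContinuousLinearMap.smulRight_apply]
      have hTw0 : 0 ≤ T (w n) := by
        rw [hTw]
        exact myReal_smul_nonneg (le_trans (by positivity) hgw) he0
      have habsT : |T (w n)| = T (w n) := abs_of_nonneg hTw0
      have hle1 : c₀ • e ≤ |T (w n)| ⊓ e := by
        rw [habsT, hTw]
        refine le_inf (myReal_smul_le (le_trans (min_le_left _ _) hgw) he0) ?_
        have h9 := myReal_smul_le (min_le_right (ε / 4) 1) he0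
        rwa [one_smul] at h9
      have h0inf : 0 ≤ |T (w n)| ⊓ e := le_inf (abs_nonneg _) he0
      have h8 : ‖c₀ • e‖ ≤ ‖|T (w n)| ⊓ e‖ := by
        refine HasSolidNorm.solid ?_
        rw [abs_of_nonneg (myReal_smul_nonneg hc₀pos.le he0), abs_of_nonneg h0inf]
        exact hle1
      calc c₀ * ‖e‖ = ‖c₀ • e‖ := by
            rw [norm_smul, Real.norm_eq_abs, abs_of_pos hc₀pos]
        _ ≤ ‖|T (w n)| ⊓ e‖ := h8
    have hev := hun.eventually (gt_mem_nhds (by positivity : (0:ℝ) < c₀ * ‖e‖))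
    obtain ⟨n, hn⟩ := hev.exists
    exact absurd (hlow n) (not_le.2 hn)
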